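/- Let P : Cᵒᵖ → BoolAlg be a Boolean doctrine over a small category C with finite products, and let F = (F_X)_{X ∈ C} be a family with F_X ⊆ P(X) for each X ∈ C. Then the following are equivalent: (1) there is a family ℳ of propositional models of P such that, for every X ∈ C, F_X = {α ∈ P(X) : for all (M, 𝔪) ∈ ℳ and all x ∈ M(X), x ∈ 𝔪_X(α)}; (2) F is a universal filter for P; (3) F is the componentwise intersection of the universal ultrafilters for P containing F componentwise. Moreover, the analogous equivalence holds for the strengthened statements obtained by additionally requiring ℳ to be nonempty in (1), ⊥ ∉ F_t in (2), and the existence of at least one universal ultrafilter for P containing F componentwise in (3). -/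

import Mathlib

open CategoryTheory CategoryTheory.Limits Opposite

universe w v u v₁ u₁ v₂ u₂ v₃ u₃

namespace BooleanDoctrine

/-- Elements of a Boolean algebra in the category `BoolAlg` can be acted on by morphisms. -/
instance (X Y : BoolAlg) : FunLike (X ⟶ Y) X Y :=
  show FunLike (X ⟶ Y) X Y from ConcreteCategory.instFunLike

/-- A filter of a Boolean algebra: contains `⊤`, closed under binary meets, upward closed. -/
def IsBAFilter {A : Type*} [BooleanAlgebra A] (F : Set A) : Prop :=
  (⊤ : A) ∈ F ∧ (∀ a b : A, a ∈ F → b ∈ F → a ⊓ b ∈ F) ∧ ∀ a b : A, a ∈ F → a ≤ b → b ∈ F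

/-- The fiber of a Boolean doctrine at an object of the base category. -/
abbrev fiber {C : Type u₁} [Category.{v₁} C] (P : Cᵒᵖ ⥤ BoolAlg.{w}) (X : C) : Type w :=
  P.obj (op X)

/-- A universal filter for a Boolean doctrine `P : Cᵒᵖ ⥤ BoolAlg`. -/
def IsUniversalFilter {C : Type u₁} [Category.{v₁} C] [HasFiniteProducts C]
    (P : Cᵒᵖ ⥤ BoolAlg.{w}) (F : ∀ X : C, Set (P.obj (op X))) : Prop :=
  (∀ (X Y : C) (f : X ⟶ Y) (α : P.obj (op Y)), α ∈ F Y → P.map f.op α ∈ F X) ∧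
    ∀ X : C, IsBAFilter (F X)

/-- A universal ideal for a Boolean doctrine `P : Cᵒᵖ ⥤ BoolAlg`. -/
def IsUniversalIdeal {C : Type u₁} [Category.{v₁} C] [HasFiniteProducts C]
    (P : Cᵒᵖ ⥤ BoolAlg.{w}) (I : ∀ X : C, Set (P.obj (op X))) : Prop :=
  (∀ (X Y : C) (m : ℕ) (f : Fin m → (X ⟶ Y)) (α : P.obj (op Y)),
      (Finset.univ.inf fun j => P.map (f j).op α) ∈ I X → α ∈ I Y) ∧
    (∀ (X : C) (a b : P.obj (op X)), a ≤ b → b ∈ I X → a ∈ I X) ∧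
    (∀ (X₁ X₂ : C) (α₁ : P.obj (op X₁)) (α₂ : P.obj (op X₂)), α₁ ∈ I X₁ → α₂ ∈ I X₂ →
      P.map (prod.fst : X₁ ⨯ X₂ ⟶ X₁).op α₁ ⊔ P.map (prod.snd : X₁ ⨯ X₂ ⟶ X₂).op α₂ ∈
        I (X₁ ⨯ X₂)) ∧
    (⊥ : P.obj (op (⊤_ C))) ∈ I (⊤_ C)

/-- A universal ultrafilter for a Boolean doctrine `P : Cᵒᵖ ⥤ BoolAlg`. -/
def IsUniversalUltrafilter {C : Type u₁} [Category.{v₁} C] [HasFiniteProducts C]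
    (P : Cᵒᵖ ⥤ BoolAlg.{w}) (F : ∀ X : C, Set (P.obj (op X))) : Prop :=
  (∀ (X Y : C) (f : X ⟶ Y) (α : P.obj (op Y)), α ∈ F Y → P.map f.op α ∈ F X) ∧
    (∀ X : C, IsBAFilter (F X)) ∧
    (∀ (X₁ X₂ : C) (α₁ : P.obj (op X₁)) (α₂ : P.obj (op X₂)),
      P.map (prod.fst : X₁ ⨯ X₂ ⟶ X₁).op α₁ ⊔ P.map (prod.snd : X₁ ⨯ X₂ ⟶ X₂).op α₂ ∈
          F (X₁ ⨯ X₂) →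
        α₁ ∈ F X₁ ∨ α₂ ∈ F X₂) ∧
    (⊥ : P.obj (op (⊤_ C))) ∉ F (⊤_ C)

/-- Richness of a Boolean doctrine with respect to a family of subsets of the fibers. -/
def IsRich {C : Type u₁} [Category.{v₁} C] [HasFiniteProducts C]
    (P : Cᵒᵖ ⥤ BoolAlg.{w}) (F : ∀ X : C, Set (P.obj (op X))) : Prop :=
  ∀ (X : C) (α : P.obj (op X)), α ∉ F X → ∃ c : (⊤_ C) ⟶ X, P.map c.op α ∉ F (⊤_ C)

/-- The failure of the "universal closure" of `a` witnessed by a constant `c : ⊤ ⟶ X`. -/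
def IsRichAt {C : Type u₁} [Category.{v₁} C] [HasFiniteProducts C]
    (P : Cᵒᵖ ⥤ BoolAlg.{w}) (F : ∀ X : C, Set (P.obj (op X)))
    (X : C) (a : P.obj (op X)) : Prop :=
  ∃ c : (⊤_ C) ⟶ X, P.map c.op a ∉ F (⊤_ C)

/-- The universal filter generated by a family of subsets of the fibers: the intersection of
all universal filters containing the family componentwise. -/
def genUnivFilter {C : Type u₁} [Category.{v₁} C] [HasFiniteProducts C]
    (P : Cᵒᵖ ⥤ BoolAlg.{w}) (A : ∀ X : C, Set (P.obj (op X))) :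
    ∀ X : C, Set (P.obj (op X)) := fun X =>
  {φ | ∀ G : ∀ X' : C, Set (P.obj (op X')),
    IsUniversalFilter P G → (∀ X', A X' ⊆ G X') → φ ∈ G X}

/-- The universal ideal generated by a family of subsets of the fibers: the intersection of
all universal ideals containing the family componentwise. -/
def genUnivIdeal {C : Type u₁} [Category.{v₁} C] [HasFiniteProducts C]
    (P : Cᵒᵖ ⥤ BoolAlg.{w}) (A : ∀ X : C, Set (P.obj (op X))) :
    ∀ X : C, Set (P.obj (op X)) := fun X =>
  {φ | ∀ J : ∀ X' : C, Set (P.obj (op X')),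
    IsUniversalIdeal P J → (∀ X', A X' ⊆ J X') → φ ∈ J X}

/-- The family of subsets of the fibers placing the element `α i` in the component `Y i`. -/
def familyOfPoints {C : Type u₁} [Category.{v₁} C] (P : Cᵒᵖ ⥤ BoolAlg.{w}) {ι : Type u₃}
    (Y : ι → C) (α : ∀ i, P.obj (op (Y i))) : ∀ X : C, Set (P.obj (op X)) := fun X =>
  {a | ∃ (i : ι) (h : Y i = X), a = P.map (eqToHom h.symm).op (α i)}

/-- The subsets doctrine, sending a set to its powerset Boolean algebra and a function to
its preimage map. -/
def subsetsDoctrine : (Type v)ᵒᵖ ⥤ BoolAlg.{v} where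
  obj X := BoolAlg.of (Set X.unop)
  map f := BoolAlg.ofHom
    { toFun := fun S => f.unop ⁻¹' S
      map_sup' := fun _ _ => rfl
      map_inf' := fun _ _ => rfl
      map_top' := rfl
      map_bot' := rfl }
  map_id _ := rfl
  map_comp _ _ := rfl

/-- A Boolean doctrine morphism: a finite-product-preserving functor together with a
natural transformation. -/
structure DoctrineHom {C : Type u₁} [Category.{v₁} C] {D : Type u₂} [Category.{v₂} D]
    (P : Cᵒᵖ ⥤ BoolAlg.{w}) (R : Dᵒᵖ ⥤ BoolAlg.{w}) where
  functor : C ⥤ D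
  preserves : PreservesFiniteProducts functor
  trans : P ⟶ functor.op ⋙ R

/-- Composition of Boolean doctrine morphisms. -/
def DoctrineHom.comp {C : Type u₁} [Category.{v₁} C] {D : Type u₂} [Category.{v₂} D]
    {E : Type u₃} [Category.{v₃} E]
    {P : Cᵒᵖ ⥤ BoolAlg.{w}} {R : Dᵒᵖ ⥤ BoolAlg.{w}} {S : Eᵒᵖ ⥤ BoolAlg.{w}}
    (Φ : DoctrineHom P R) (Ψ : DoctrineHom R S) : DoctrineHom P S where
  functor := Φ.functor ⋙ Ψ.functor
  preserves := by
    have := Φ.preserves; have := Ψ.preserves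
    infer_instance
  trans := Φ.trans ≫ Functor.whiskerLeft Φ.functor.op Ψ.trans

/-- A first-order structure on a Boolean doctrine: fiberwise right adjoints to reindexing
along first projections, satisfying the Beck–Chevalley condition. -/
structure FOStructure {C : Type u₁} [Category.{v₁} C] [HasFiniteProducts C]
    (P : Cᵒᵖ ⥤ BoolAlg.{w}) where
  fa : ∀ X Y : C, P.obj (op (X ⨯ Y)) → P.obj (op X)
  adj : ∀ (X Y : C) (α : P.obj (op X)) (β : P.obj (op (X ⨯ Y))),
      α ≤ fa X Y β ↔ P.map (prod.fst : X ⨯ Y ⟶ X).op α ≤ β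
  bc : ∀ (X X' Y : C) (f : X' ⟶ X) (β : P.obj (op (X ⨯ Y))),
      P.map f.op (fa X Y β) = fa X' Y (P.map (prod.map f (𝟙 Y)).op β)

/-- The existential quantifier `∃ = ¬∀¬` associated to a first-order structure. -/
noncomputable def FOStructure.ex {C : Type u₁} [Category.{v₁} C] [HasFiniteProducts C]
    {P : Cᵒᵖ ⥤ BoolAlg.{w}} (fo : FOStructure P) (X Y : C)
    (β : P.obj (op (X ⨯ Y))) : P.obj (op X) :=
  (fo.fa X Y βᶜ)ᶜ

/-- The canonical comparison morphism `M X ⨯ M Y ⟶ M (X ⨯ Y)` of a Boolean doctrine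
morphism, inverse to the product comparison morphism. -/
noncomputable def DoctrineHom.prodPair {C : Type u₁} [Category.{v₁} C] [HasFiniteProducts C]
    {D : Type u₂} [Category.{v₂} D] [HasFiniteProducts D]
    {P : Cᵒᵖ ⥤ BoolAlg.{w}} {R : Dᵒᵖ ⥤ BoolAlg.{w}} (Φ : DoctrineHom P R) (X Y : C) :
    (Φ.functor.obj X ⨯ Φ.functor.obj Y) ⟶ Φ.functor.obj (X ⨯ Y) :=
  letI := Φ.preserves
  (PreservesLimitPair.iso Φ.functor X Y).inv

/-- The image of an element of `P (X ⨯ Y)` in `R (M X ⨯ M Y)`, transported along the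
canonical isomorphism `M (X ⨯ Y) ≅ M X ⨯ M Y`. -/
noncomputable def DoctrineHom.transProd {C : Type u₁} [Category.{v₁} C] [HasFiniteProducts C]
    {D : Type u₂} [Category.{v₂} D] [HasFiniteProducts D]
    {P : Cᵒᵖ ⥤ BoolAlg.{w}} {R : Dᵒᵖ ⥤ BoolAlg.{w}} (Φ : DoctrineHom P R) (X Y : C)
    (α : P.obj (op (X ⨯ Y))) : R.obj (op (Φ.functor.obj X ⨯ Φ.functor.obj Y)) :=
  R.map (Φ.prodPair X Y).op (Φ.trans.app (op (X ⨯ Y)) α)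

/-- A Boolean doctrine morphism between first-order Boolean doctrines is first-order when it
commutes with the universal quantifiers. -/
def DoctrineHom.IsFO {C : Type u₁} [Category.{v₁} C] [HasFiniteProducts C]
    {D : Type u₂} [Category.{v₂} D] [HasFiniteProducts D]
    {P : Cᵒᵖ ⥤ BoolAlg.{w}} {R : Dᵒᵖ ⥤ BoolAlg.{w}} (Φ : DoctrineHom P R)
    (foP : FOStructure P) (foR : FOStructure R) : Prop :=
  ∀ (X Y : C) (β : P.obj (op (X ⨯ Y))),
    (Φ.trans.app (op X) (foP.fa X Y β) : R.obj (op (Φ.functor.obj X))) =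
      foR.fa (Φ.functor.obj X) (Φ.functor.obj Y) (Φ.transProd X Y β)

/-- The Boolean doctrine morphism with identity functor part induced by a natural
transformation between two doctrines over the same base. -/
def idDoctrineHom {C : Type u₁} [Category.{v₁} C] {P Q : Cᵒᵖ ⥤ BoolAlg.{w}} (η : P ⟶ Q) :
    DoctrineHom P Q where
  functor := 𝟭 C
  preserves := inferInstance
  trans := η

/-- A quantifier completion of a Boolean doctrine `P`: a first-order Boolean doctrine `Q`
over the same base category together with a Boolean doctrine morphism `(𝟭 C, ι) : P ⟶ Q`
whose functor part is the identity, such that every Boolean doctrine morphism from `P` to a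
first-order Boolean doctrine factors uniquely through it via a first-order Boolean doctrine
morphism. -/
structure QuantifierCompletion.{w', v', u', v₁', u₁'} {C : Type u₁'} [Category.{v₁'} C]
    [HasFiniteProducts C] (P : Cᵒᵖ ⥤ BoolAlg.{w'}) where
  Q : Cᵒᵖ ⥤ BoolAlg.{w'}
  fo : FOStructure Q
  ι : P ⟶ Q
  univ : ∀ {D : Type u'} [Category.{v'} D] [HasFiniteProducts D]
      (R : Dᵒᵖ ⥤ BoolAlg.{w'}) (foR : FOStructure R) (Φ : DoctrineHom P R),
      ∃! Ψ : DoctrineHom Q R, Ψ.IsFO fo foR ∧ Φ = (idDoctrineHom ι).comp Ψ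

/-- A propositional model of a Boolean doctrine: a Boolean doctrine morphism to the
subsets doctrine. -/
abbrev PropModel {C : Type u} [Category.{v} C] (P : Cᵒᵖ ⥤ BoolAlg.{v}) :=
  DoctrineHom P subsetsDoctrine.{v}

/-- The subset of `M X` interpreting an element `α ∈ P X` in a propositional model. -/
def PropModel.interp {C : Type u} [Category.{v} C] {P : Cᵒᵖ ⥤ BoolAlg.{v}}
    (M : PropModel P) {X : C} (α : P.obj (op X)) : Set (M.functor.obj X) :=
  M.trans.app (op X) α



/-- The object map of a Boolean doctrine morphism. -/
abbrev DoctrineHom.onObj {C : Type u₁} [Category.{v₁} C] {D : Type u₂} [Category.{v₂} D]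
    {P : Cᵒᵖ ⥤ BoolAlg.{w}} {R : Dᵒᵖ ⥤ BoolAlg.{w}} (Φ : DoctrineHom P R) (X : C) : D :=
  Φ.functor.obj X

/-- The component at `X` of the natural transformation of a Boolean doctrine morphism,
applied to an element of the fiber. -/
abbrev DoctrineHom.appAt {C : Type u₁} [Category.{v₁} C] {D : Type u₂} [Category.{v₂} D]
    {P : Cᵒᵖ ⥤ BoolAlg.{w}} {R : Dᵒᵖ ⥤ BoolAlg.{w}} (Φ : DoctrineHom P R) (X : C)
    (a : P.obj (op X)) : R.obj (op (Φ.functor.obj X)) :=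
  Φ.trans.app (op X) a

-- point model test
variable {C : Type u} [SmallCategory C] [HasFiniteProducts C] (P : Cᵒᵖ ⥤ BoolAlg.{u})

lemma hom_sup {X Y : BoolAlg} (f : X ⟶ Y) (a b : X) : f (a ⊔ b) = f a ⊔ f b :=
  map_sup (ConcreteCategory.hom f) a b
lemma hom_inf {X Y : BoolAlg} (f : X ⟶ Y) (a b : X) : f (a ⊓ b) = f a ⊓ f b :=
  map_inf (ConcreteCategory.hom f) a b
lemma hom_top {X Y : BoolAlg} (f : X ⟶ Y) : f ⊤ = ⊤ :=
  map_top (ConcreteCategory.hom f)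
lemma hom_bot {X Y : BoolAlg} (f : X ⟶ Y) : f ⊥ = ⊥ :=
  map_bot (ConcreteCategory.hom f)
lemma hom_mono {X Y : BoolAlg} (f : X ⟶ Y) {a b : X} (h : a ≤ b) : f a ≤ f b := by
  have : f a = f (a ⊓ b) := by rw [inf_eq_left.mpr h]
  rw [this, hom_inf]; exact inf_le_right
lemma hom_finset_inf {X Y : BoolAlg} (f : X ⟶ Y) {ι : Type*} (s : Finset ι) (g : ι → X) :
    f (s.inf g) = s.inf fun i => f (g i) :=
  map_finset_inf (ConcreteCategory.hom f) s g

lemma Pcomp {X Y Z : C} (f : X ⟶ Y) (g : Y ⟶ Z) (a : P.obj (op Z)) :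
    P.map f.op (P.map g.op a) = P.map (f ≫ g).op a := by
  rw [op_comp, P.map_comp]; rfl
lemma Pid {X : C} (a : P.obj (op X)) : P.map (𝟙 X).op a = a := by
  rw [op_id, P.map_id]; rfl

/-- The propositional model determined by an object `W` and a prime proper filter on `P W`. -/
def pointModel (W : C) (U : Set (P.obj (op W))) (hU : IsBAFilter U)
    (hprime : ∀ a b, a ⊔ b ∈ U → a ∈ U ∨ b ∈ U) (hbot : (⊥ : P.obj (op W)) ∉ U) :
    PropModel P where
  functor := coyoneda.obj (op W)
  preserves := ⟨fun _ => inferInstance⟩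
  trans :=
    { app := fun X => BoolAlg.ofHom
        { toFun := fun α => {f : W ⟶ X.unop | P.map f.op α ∈ U}
          map_sup' := fun a b => by
            apply Set.ext; intro f
            show P.map f.op (a ⊔ b) ∈ U ↔ _ ∈ ({f : W ⟶ X.unop | P.map f.op a ∈ U} ∪ {f | P.map f.op b ∈ U})
            rw [hom_sup]
            simp only [Set.mem_union, Set.mem_setOf_eq]
            constructor
            · exact fun h => hprime _ _ h
            · rintro (h | h)
              · exact hU.2.2 _ _ h le_sup_left
              · exact hU.2.2 _ _ h le_sup_right
          map_inf' := fun a b => by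
            apply Set.ext; intro f
            show P.map f.op (a ⊓ b) ∈ U ↔ _ ∈ ({f : W ⟶ X.unop | P.map f.op a ∈ U} ∩ {f | P.map f.op b ∈ U})
            rw [hom_inf]
            simp only [Set.mem_inter_iff, Set.mem_setOf_eq]
            constructor
            · exact fun h => ⟨hU.2.2 _ _ h inf_le_left, hU.2.2 _ _ h inf_le_right⟩
            · exact fun ⟨h1, h2⟩ => hU.2.1 _ _ h1 h2
          map_top' := by
            apply Set.ext; intro f
            show P.map f.op ⊤ ∈ U ↔ f ∈ (Set.univ : Set (W ⟶ X.unop))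
            rw [hom_top]
            simp [hU.1]
          map_bot' := by
            apply Set.ext; intro f
            show P.map f.op ⊥ ∈ U ↔ f ∈ (∅ : Set (W ⟶ X.unop))
            rw [hom_bot]
            simp [hbot] }
      naturality := fun X Y g => by
        apply DFunLike.ext
        intro α
        apply Set.ext
        intro f
        show P.map f.op (P.map g α) ∈ U ↔ P.map (f ≫ g.unop).op α ∈ U
        rw [op_comp, P.map_comp]
        rfl }

lemma pointModel_interp (W : C) (U : Set (P.obj (op W))) (hU : IsBAFilter U)
    (hprime : ∀ a b, a ⊔ b ∈ U → a ∈ U ∨ b ∈ U) (hbot : (⊥ : P.obj (op W)) ∉ U)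
    {X : C} (α : P.obj (op X)) (f : W ⟶ X) :
    f ∈ PropModel.interp (pointModel P W U hU hprime hbot) α ↔ P.map f.op α ∈ U :=
  Iff.rfl


lemma inf_mem_filter {A : Type*} [BooleanAlgebra A] {Fl : Set A} (h : IsBAFilter Fl)
    {ι : Type*} (s : Finset ι) (v : ι → A) (hv : ∀ i ∈ s, v i ∈ Fl) : s.inf v ∈ Fl := by
  classical
  induction s using Finset.induction with
  | empty => simpa using h.1
  | insert _ _ hnot ih =>
    rw [Finset.inf_insert]
    exact h.2.1 _ _ (hv _ (Finset.mem_insert_self _ _))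
      (ih fun i hi => hv i (Finset.mem_insert_of_mem hi))

/-- The auxiliary "universal ideal" generated by a single element `α₀ ∈ P X₀`. -/
inductive Idl {C : Type u} [SmallCategory C] [HasFiniteProducts C] (P : Cᵒᵖ ⥤ BoolAlg.{u})
    (X₀ : C) (α₀ : P.obj (op X₀)) : ∀ Z : C, P.obj (op Z) → Prop
  | base : Idl P X₀ α₀ X₀ α₀
  | bot : Idl P X₀ α₀ (⊤_ C) ⊥
  | down {Z : C} {a b : P.obj (op Z)} : a ≤ b → Idl P X₀ α₀ Z b → Idl P X₀ α₀ Z a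
  | pair {Z Z' : C} {a : P.obj (op Z)} {b : P.obj (op Z')} :
      Idl P X₀ α₀ Z a → Idl P X₀ α₀ Z' b →
      Idl P X₀ α₀ (Z ⨯ Z')
        (P.map (prod.fst : Z ⨯ Z' ⟶ Z).op a ⊔ P.map (prod.snd : Z ⨯ Z' ⟶ Z').op b)

lemma Idl.witness {X₀ : C} {α₀ : P.obj (op X₀)} {Z : C} {δ : P.obj (op Z)}
    (h : Idl P X₀ α₀ Z δ) : ∃ d : X₀ ⟶ Z, P.map d.op δ ≤ α₀ := by
  induction h with
  | base => exact ⟨𝟙 X₀, by rw [Pid]⟩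
  | bot => exact ⟨terminal.from X₀, by rw [hom_bot]; exact bot_le⟩
  | down hab _ ih =>
    obtain ⟨d, hd⟩ := ih
    exact ⟨d, le_trans (hom_mono _ hab) hd⟩
  | pair h1 h2 ih1 ih2 =>
    obtain ⟨d1, hd1⟩ := ih1
    obtain ⟨d2, hd2⟩ := ih2
    refine ⟨prod.lift d1 d2, ?_⟩
    rw [hom_sup, Pcomp, Pcomp, prod.lift_fst, prod.lift_snd]
    exact sup_le hd1 hd2

/-- Extending a universal filter by one element. -/
lemma extFilter_spec (G : ∀ X : C, Set (P.obj (op X))) (hG : IsUniversalFilter P G)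
    (X₁ : C) (α₁ : P.obj (op X₁)) :
    ∃ E : ∀ X : C, Set (P.obj (op X)), IsUniversalFilter P E ∧ (∀ X, G X ⊆ E X) ∧
      α₁ ∈ E X₁ ∧ ∀ (Z : C) (δ : P.obj (op Z)), δ ∈ E Z →
        ∃ g ∈ G Z, ∃ T : Finset (Z ⟶ X₁), g ⊓ T.inf (fun f => P.map f.op α₁) ≤ δ := by
  classical
  refine ⟨fun Z => {γ | ∃ g ∈ G Z, ∃ T : Finset (Z ⟶ X₁),
      g ⊓ T.inf (fun f => P.map f.op α₁) ≤ γ}, ⟨?_, fun Z => ⟨?_, ?_, ?_⟩⟩, ?_, ?_, ?_⟩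
  · -- reindexing
    rintro Z' Z f γ ⟨g, hg, T, hle⟩
    refine ⟨P.map f.op g, hG.1 _ _ f g hg, T.image (fun h => f ≫ h), ?_⟩
    rw [Finset.inf_image]
    have : T.inf ((fun h : Z' ⟶ X₁ => P.map h.op α₁) ∘ (fun h => f ≫ h)) =
        P.map f.op (T.inf fun h => P.map h.op α₁) := by
      rw [hom_finset_inf]
      exact Finset.inf_congr rfl fun h _ => (Pcomp P f h α₁).symm
    rw [this, ← hom_inf]
    exact hom_mono _ hle
  · exact ⟨⊤, (hG.2 Z).1, ∅, by simp⟩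
  · rintro a b ⟨g, hg, T, hT⟩ ⟨g', hg', T', hT'⟩
    refine ⟨g ⊓ g', (hG.2 Z).2.1 _ _ hg hg', T ∪ T', ?_⟩
    rw [Finset.inf_union]
    refine le_inf (le_trans ?_ hT) (le_trans ?_ hT')
    · exact inf_le_inf inf_le_left inf_le_left
    · exact inf_le_inf inf_le_right inf_le_right
  · rintro a b ⟨g, hg, T, hT⟩ hab
    exact ⟨g, hg, T, hT.trans hab⟩
  · exact fun X γ hγ => ⟨γ, hγ, ∅, by simp⟩
  · exact ⟨⊤, (hG.2 X₁).1, {𝟙 X₁}, by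
      have : (𝟙 (P.obj (op X₁))) α₁ = α₁ := rfl
      simp [Pid, this]⟩
  · exact fun Z δ h => h


/-- Every universal filter omitting an element extends to a universal ultrafilter
omitting that element. -/
lemma exists_universal_ultrafilter (F : ∀ X : C, Set (P.obj (op X)))
    (hF : IsUniversalFilter P F) (X₀ : C) (α₀ : P.obj (op X₀)) (hα : α₀ ∉ F X₀) :
    ∃ G : ∀ X : C, Set (P.obj (op X)),
      IsUniversalUltrafilter P G ∧ (∀ X, F X ⊆ G X) ∧ α₀ ∉ G X₀ := by
  classical
  set s : Set (∀ X : C, Set (P.obj (op X))) :=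
    {G | IsUniversalFilter P G ∧ (∀ X, F X ⊆ G X) ∧
      ∀ (Z : C) (δ : P.obj (op Z)), Idl P X₀ α₀ Z δ → δ ∉ G Z} with hs
  have hFs : F ∈ s := by
    refine ⟨hF, fun X => subset_rfl, ?_⟩
    intro Z δ hIdl hδ
    obtain ⟨d, hd⟩ := hIdl.witness
    exact hα ((hF.2 X₀).2.2 _ _ (hF.1 _ _ d δ hδ) hd)
  have ih : ∀ c ⊆ s, IsChain (· ≤ ·) c → ∀ y ∈ c, ∃ ub ∈ s, ∀ z ∈ c, z ≤ ub := by
    intro c hcs hchain y hy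
    refine ⟨fun X => {a | ∃ g ∈ c, a ∈ g X}, ⟨⟨?_, fun X => ⟨?_, ?_, ?_⟩⟩, ?_, ?_⟩, ?_⟩
    · rintro X Y f a ⟨g, hg, ha⟩
      exact ⟨g, hg, (hcs hg).1.1 _ _ f a ha⟩
    · exact ⟨y, hy, ((hcs hy).1.2 X).1⟩
    · rintro a b ⟨g, hg, ha⟩ ⟨g', hg', hb⟩
      rcases eq_or_ne g g' with rfl | hne
      · exact ⟨g, hg, ((hcs hg).1.2 X).2.1 _ _ ha hb⟩
      rcases hchain hg hg' hne with h | h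
      · exact ⟨g', hg', ((hcs hg').1.2 X).2.1 _ _ (h X ha) hb⟩
      · exact ⟨g, hg, ((hcs hg).1.2 X).2.1 _ _ ha (h X hb)⟩
    · rintro a b ⟨g, hg, ha⟩ hab
      exact ⟨g, hg, ((hcs hg).1.2 X).2.2 _ _ ha hab⟩
    · exact fun X x hx => ⟨y, hy, (hcs hy).2.1 X hx⟩
    · rintro Z δ hI ⟨g, hg, hδ⟩
      exact (hcs hg).2.2 Z δ hI hδ
    · exact fun z hz X a ha => ⟨z, hz, ha⟩
  obtain ⟨G, hFG, hGmax⟩ := zorn_le_nonempty₀ s ih F hFs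
  obtain ⟨hGU, hGF, hGdisj⟩ := hGmax.1
  have key : ∀ (X₁ : C) (α₁ : P.obj (op X₁)), α₁ ∉ G X₁ →
      ∃ (Z : C) (δ : P.obj (op Z)), Idl P X₀ α₀ Z δ ∧
        ∃ g ∈ G Z, ∃ T : Finset (Z ⟶ X₁), g ⊓ T.inf (fun f => P.map f.op α₁) ≤ δ := by
    intro X₁ α₁ hα₁
    obtain ⟨E, hEU, hGE, hα₁E, hEdesc⟩ := extFilter_spec P G hGU X₁ α₁
    have hEnots : E ∉ s := fun hmem =>
      hα₁ ((hGmax.2 hmem (fun X => hGE X)) X₁ hα₁E)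
    have hnd : ¬ ∀ (Z : C) (δ : P.obj (op Z)), Idl P X₀ α₀ Z δ → δ ∉ E Z := fun hdisj =>
      hEnots ⟨hEU, fun X => (hGF X).trans (hGE X), hdisj⟩
    push_neg at hnd
    obtain ⟨Z, δ, hI, hδE⟩ := hnd
    exact ⟨Z, δ, hI, hEdesc Z δ hδE⟩
  refine ⟨G, ⟨hGU.1, hGU.2, ?_, fun h => hGdisj _ _ Idl.bot h⟩, hGF,
    fun h => hGdisj _ _ Idl.base h⟩
  intro X₁ X₂ α₁ α₂ hσ
  by_contra hcon
  push_neg at hcon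
  obtain ⟨h1, h2⟩ := hcon
  obtain ⟨Z, δ, hIδ, g₁, hg₁, T1, hT1⟩ := key X₁ α₁ h1
  obtain ⟨Z', δ', hIδ', g₂, hg₂, T2, hT2⟩ := key X₂ α₂ h2
  set p : Z ⨯ Z' ⟶ Z := prod.fst with hp
  set q : Z ⨯ Z' ⟶ Z' := prod.snd with hq
  have hstep : ∀ f ∈ T1, ∀ g ∈ T2,
      P.map (p ≫ f).op α₁ ⊔ P.map (q ≫ g).op α₂ ∈ G (Z ⨯ Z') := by
    intro f hf g hg
    have h := hGU.1 _ _ (prod.lift (p ≫ f) (q ≫ g)) _ hσ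
    rwa [hom_sup, Pcomp, Pcomp, prod.lift_fst, prod.lift_snd] at h
  have hτ : (T1 ×ˢ T2).inf
      (fun r => P.map (p ≫ r.1).op α₁ ⊔ P.map (q ≫ r.2).op α₂) ∈ G (Z ⨯ Z') := by
    refine inf_mem_filter (hGU.2 _) _ _ ?_
    rintro ⟨f, g⟩ hr
    rw [Finset.mem_product] at hr
    exact hstep _ hr.1 _ hr.2
  have hA : P.map p.op (T1.inf fun f => P.map f.op α₁) =
      T1.inf (fun f => P.map (p ≫ f).op α₁) := by
    rw [hom_finset_inf]
    exact Finset.inf_congr rfl fun f _ => Pcomp P p f α₁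
  have hB : P.map q.op (T2.inf fun g => P.map g.op α₂) =
      T2.inf (fun g => P.map (q ≫ g).op α₂) := by
    rw [hom_finset_inf]
    exact Finset.inf_congr rfl fun g _ => Pcomp P q g α₂
  have hη : (P.map p.op g₁ ⊓ P.map q.op g₂) ⊓ (T1 ×ˢ T2).inf
      (fun r => P.map (p ≫ r.1).op α₁ ⊔ P.map (q ≫ r.2).op α₂) ∈ G (Z ⨯ Z') :=
    (hGU.2 _).2.1 _ _
      ((hGU.2 _).2.1 _ _ (hGU.1 _ _ p g₁ hg₁) (hGU.1 _ _ q g₂ hg₂)) hτ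
  have hle : (P.map p.op g₁ ⊓ P.map q.op g₂) ⊓ (T1 ×ˢ T2).inf
      (fun r => P.map (p ≫ r.1).op α₁ ⊔ P.map (q ≫ r.2).op α₂) ≤
      P.map p.op δ ⊔ P.map q.op δ' := by
    have hsplit : T1.inf (fun f => P.map (p ≫ f).op α₁) ⊔
        T2.inf (fun g => P.map (q ≫ g).op α₂) =
        (T1 ×ˢ T2).inf (fun r => P.map (p ≫ r.1).op α₁ ⊔ P.map (q ≫ r.2).op α₂) :=
      Finset.inf_sup_inf T1 T2 _ _
    rw [← hsplit, ← hA, ← hB, inf_sup_left]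
    apply sup_le
    · refine le_sup_of_le_left ?_
      have h1 : (P.map p.op g₁ ⊓ P.map q.op g₂) ⊓
          P.map p.op (T1.inf fun f => P.map f.op α₁) ≤
          P.map p.op g₁ ⊓ P.map p.op (T1.inf fun f => P.map f.op α₁) :=
        inf_le_inf inf_le_left le_rfl
      refine h1.trans ?_
      rw [← hom_inf]
      exact hom_mono _ hT1
    · refine le_sup_of_le_right ?_
      have h1 : (P.map p.op g₁ ⊓ P.map q.op g₂) ⊓
          P.map q.op (T2.inf fun g => P.map g.op α₂) ≤
          P.map q.op g₂ ⊓ P.map q.op (T2.inf fun g => P.map g.op α₂) :=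
        inf_le_inf inf_le_right le_rfl
      refine h1.trans ?_
      rw [← hom_inf]
      exact hom_mono _ hT2
  exact hGdisj _ _ (Idl.pair hIδ hIδ') ((hGU.2 _).2.2 _ _ hη hle)


lemma exists_prime_filter {A : Type*} [BooleanAlgebra A] (F : Set A) (hF : IsBAFilter F)
    (α : A) (hα : α ∉ F) :
    ∃ U : Set A, IsBAFilter U ∧ F ⊆ U ∧ α ∉ U ∧
      (∀ a b : A, a ⊔ b ∈ U → a ∈ U ∨ b ∈ U) ∧ (⊥ : A) ∉ U := by
  obtain ⟨hTop, hInf, hUp⟩ := hF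
  set S : Set (Set A) := {U | IsBAFilter U ∧ F ⊆ U ∧ α ∉ U} with hS
  have chain : ∀ c ⊆ S, IsChain (· ⊆ ·) c → c.Nonempty → ∃ ub ∈ S, ∀ s ∈ c, s ⊆ ub := by
    rintro c hcS hchain ⟨y, hy⟩
    refine ⟨⋃₀ c, ⟨⟨Set.mem_sUnion.2 ⟨y, hy, (hcS hy).1.1⟩, ?_, ?_⟩, ?_, ?_⟩, fun s hs => Set.subset_sUnion_of_mem hs⟩
    · rintro a b ⟨s, hs, has⟩ ⟨t, ht, hbt⟩
      rcases hchain.total hs ht with h | h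
      · exact ⟨t, ht, (hcS ht).1.2.1 a b (h has) hbt⟩
      · exact ⟨s, hs, (hcS hs).1.2.1 a b has (h hbt)⟩
    · rintro a b ⟨s, hs, has⟩ hab
      exact ⟨s, hs, (hcS hs).1.2.2 a b has hab⟩
    · exact fun x hx => ⟨y, hy, (hcS hy).2.1 hx⟩
    · rintro ⟨s, hs, hαs⟩
      exact (hcS hs).2.2 hαs
  obtain ⟨U, hFU, hUmax⟩ := zorn_subset_nonempty S chain F ⟨⟨hTop, hInf, hUp⟩, le_refl F, hα⟩
  obtain ⟨⟨hUTop, hUInf, hUUp⟩, hFsub, hαU⟩ := hUmax.1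
  have hbot : (⊥ : A) ∉ U := fun h => hαU (hUUp ⊥ α h bot_le)
  refine ⟨U, ⟨hUTop, hUInf, hUUp⟩, hFsub, hαU, ?_, hbot⟩
  -- primeness
  intro a b hab
  by_contra hcon
  push_neg at hcon
  obtain ⟨ha, hb⟩ := hcon
  -- extension of U by an element x
  have key : ∀ x : A, x ∉ U → ∃ u ∈ U, u ⊓ x ≤ α := by
    intro x hx
    by_contra hno
    push_neg at hno
    set Ux : Set A := {y | ∃ u ∈ U, u ⊓ x ≤ y} with hUx
    have hUxS : Ux ∈ S := by
      refine ⟨⟨⟨⊤, hUTop, le_top⟩, ?_, ?_⟩, fun z hz => ⟨z, hFsub hz, inf_le_left⟩, ?_⟩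
      · rintro p q ⟨u, hu, hup⟩ ⟨v, hv, hvq⟩
        exact ⟨u ⊓ v, hUInf u v hu hv, by
          calc (u ⊓ v) ⊓ x ≤ (u ⊓ x) ⊓ (v ⊓ x) := by
                simp [inf_assoc, inf_comm, inf_left_comm, le_refl]
            _ ≤ p ⊓ q := inf_le_inf hup hvq⟩
      · rintro p q ⟨u, hu, hup⟩ hpq
        exact ⟨u, hu, hup.trans hpq⟩
      · rintro ⟨u, hu, hup⟩
        exact hno u hu hup
    have hsub : U ⊆ Ux := fun z hz => ⟨z, hz, inf_le_left⟩
    have := hUmax.2 hUxS hsub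
    exact hx (this ⟨⊤, hUTop, by simp⟩)
  obtain ⟨u, hu, hua⟩ := key a ha
  obtain ⟨v, hv, hvb⟩ := key b hb
  have huv : (u ⊓ v) ⊓ (a ⊔ b) ∈ U := hUInf _ _ (hUInf u v hu hv) hab
  have : (u ⊓ v) ⊓ (a ⊔ b) ≤ α := by
    rw [inf_sup_left]
    exact sup_le ((inf_le_inf inf_le_left (le_refl a)).trans hua)
      ((inf_le_inf inf_le_right (le_refl b)).trans hvb)
  exact hαU (hUUp _ _ huv this)

lemma interp_reindex_eq (M : PropModel P) {X Y : C} (f : X ⟶ Y) (α : P.obj (op Y)) :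
    PropModel.interp M (P.map f.op α) = M.functor.map f ⁻¹' PropModel.interp M α :=
  DFunLike.congr_fun (M.trans.naturality f.op) α

lemma interp_reindex (M : PropModel P) {X Y : C} (f : X ⟶ Y) (α : P.obj (op Y))
    (x : M.functor.obj X) :
    x ∈ PropModel.interp M (P.map f.op α) ↔ M.functor.map f x ∈ PropModel.interp M α := by
  rw [interp_reindex_eq]
  exact Iff.rfl

lemma interp_top (M : PropModel P) (X : C) (x : M.functor.obj X) :
    x ∈ PropModel.interp M (⊤ : P.obj (op X)) := by
  have h : PropModel.interp M (⊤ : P.obj (op X)) = Set.univ := hom_top (M.trans.app (op X))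
  rw [h]
  trivial

lemma interp_bot (M : PropModel P) (X : C) (x : M.functor.obj X) :
    x ∉ PropModel.interp M (⊥ : P.obj (op X)) := by
  have h : PropModel.interp M (⊥ : P.obj (op X)) = ∅ := hom_bot (M.trans.app (op X))
  rw [h]
  exact fun h => h

lemma interp_inf (M : PropModel P) (X : C) (a b : P.obj (op X)) (x : M.functor.obj X) :
    x ∈ PropModel.interp M (a ⊓ b) ↔
      x ∈ PropModel.interp M a ∧ x ∈ PropModel.interp M b := by
  have h : PropModel.interp M (a ⊓ b) = PropModel.interp M a ∩ PropModel.interp M b :=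
    hom_inf (M.trans.app (op X)) a b
  rw [h]
  exact Iff.rfl

lemma interp_mono (M : PropModel P) (X : C) {a b : P.obj (op X)} (hab : a ≤ b)
    (x : M.functor.obj X) (hx : x ∈ PropModel.interp M a) : x ∈ PropModel.interp M b :=
  hom_mono (M.trans.app (op X)) hab hx

lemma models_to_filter (F : ∀ X : C, Set (P.obj (op X)))
    (h : ∃ Ms : Set (PropModel P), ∀ (X : C) (α : P.obj (op X)),
      α ∈ F X ↔ ∀ M ∈ Ms, ∀ x : M.functor.obj X, x ∈ PropModel.interp M α) :
    IsUniversalFilter P F := by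
  obtain ⟨Ms, h⟩ := h
  constructor
  · intro X Y f α hα
    rw [h]
    intro M hM x
    rw [interp_reindex]
    exact (h Y α).1 hα M hM _
  · intro X
    refine ⟨(h X ⊤).2 fun M hM x => interp_top P M X x, ?_, ?_⟩
    · intro a b ha hb
      rw [h]
      intro M hM x
      rw [interp_inf]
      exact ⟨(h X a).1 ha M hM x, (h X b).1 hb M hM x⟩
    · intro a b ha hab
      rw [h]
      intro M hM x
      exact interp_mono P M X hab x ((h X a).1 ha M hM x)

/-- The family of point models associated to a universal filter. -/
def modelsOf (F : ∀ X : C, Set (P.obj (op X))) : Set (PropModel P) :=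
  {M | ∃ (W : C) (U : Set (P.obj (op W))) (hU : IsBAFilter U)
    (hp : ∀ a b, a ⊔ b ∈ U → a ∈ U ∨ b ∈ U) (hb : (⊥ : P.obj (op W)) ∉ U),
    F W ⊆ U ∧ M = pointModel P W U hU hp hb}

lemma modelsOf_char (F : ∀ X : C, Set (P.obj (op X))) (hF : IsUniversalFilter P F)
    (X : C) (α : P.obj (op X)) :
    α ∈ F X ↔ ∀ M ∈ modelsOf P F, ∀ x : M.functor.obj X, x ∈ PropModel.interp M α := by
  constructor
  · rintro hα M ⟨W, U, hU, hp, hb, hFU, rfl⟩ x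
    refine (pointModel_interp P W U hU hp hb α x).2 ?_
    exact hFU (hF.1 W X x α hα)
  · intro hall
    by_contra hα
    obtain ⟨U, hU, hFU, hαU, hp, hb⟩ := exists_prime_filter (F X) (hF.2 X) α hα
    have hmem : pointModel P X U hU hp hb ∈ modelsOf P F :=
      ⟨X, U, hU, hp, hb, hFU, rfl⟩
    have := hall _ hmem (𝟙 X)
    replace this := (pointModel_interp P X U hU hp hb α (𝟙 X)).1 this
    rw [Pid] at this
    exact hαU this


lemma inter_uu_filter (F : ∀ X : C, Set (P.obj (op X)))
    (h : ∀ (X : C) (α : P.obj (op X)),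
      α ∈ F X ↔ ∀ G : ∀ X' : C, Set (P.obj (op X')),
        IsUniversalUltrafilter P G → (∀ X' : C, F X' ⊆ G X') → α ∈ G X) :
    IsUniversalFilter P F := by
  constructor
  · intro X Y f α hα
    rw [h]
    intro G hG hFG
    exact hG.1 X Y f α ((h Y α).1 hα G hG hFG)
  · intro X
    refine ⟨?_, ?_, ?_⟩
    · exact (h X ⊤).2 fun G hG _ => (hG.2.1 X).1
    · intro a b ha hb
      exact (h X _).2 fun G hG hFG =>
        (hG.2.1 X).2.1 a b ((h X a).1 ha G hG hFG) ((h X b).1 hb G hG hFG)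
    · intro a b ha hab
      exact (h X b).2 fun G hG hFG => (hG.2.1 X).2.2 a b ((h X a).1 ha G hG hFG) hab

lemma filter_iff_inter_uu (F : ∀ X : C, Set (P.obj (op X))) :
    IsUniversalFilter P F ↔
      ∀ (X : C) (α : P.obj (op X)),
        α ∈ F X ↔ ∀ G : ∀ X' : C, Set (P.obj (op X')),
          IsUniversalUltrafilter P G → (∀ X' : C, F X' ⊆ G X') → α ∈ G X := by
  constructor
  · intro hF X α
    constructor
    · exact fun hα G _ hFG => hFG X hα
    · intro hall
      by_contra hα
      obtain ⟨G, hGU, hFG, hαG⟩ := exists_universal_ultrafilter P F hF X α hα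
      exact hαG (hall G hGU hFG)
  · exact inter_uu_filter P F

theorem stmt19' (F : ∀ X : C, Set (P.obj (op X))) :
    ((∃ Ms : Set (PropModel P), ∀ (X : C) (α : P.obj (op X)),
        α ∈ F X ↔ ∀ M ∈ Ms, ∀ x : M.functor.obj X, x ∈ PropModel.interp M α) ↔
      IsUniversalFilter P F) ∧
    (IsUniversalFilter P F ↔
      ∀ (X : C) (α : P.obj (op X)),
        α ∈ F X ↔ ∀ G : ∀ X' : C, Set (P.obj (op X')),
          IsUniversalUltrafilter P G → (∀ X' : C, F X' ⊆ G X') → α ∈ G X) ∧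
    ((∃ Ms : Set (PropModel P), Ms.Nonempty ∧ ∀ (X : C) (α : P.obj (op X)),
        α ∈ F X ↔ ∀ M ∈ Ms, ∀ x : M.functor.obj X, x ∈ PropModel.interp M α) ↔
      (IsUniversalFilter P F ∧ (⊥ : P.obj (op (⊤_ C))) ∉ F (⊤_ C))) ∧
    ((IsUniversalFilter P F ∧ (⊥ : P.obj (op (⊤_ C))) ∉ F (⊤_ C)) ↔
      ((∀ (X : C) (α : P.obj (op X)),
          α ∈ F X ↔ ∀ G : ∀ X' : C, Set (P.obj (op X')),
            IsUniversalUltrafilter P G → (∀ X' : C, F X' ⊆ G X') → α ∈ G X) ∧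
        ∃ G : ∀ X' : C, Set (P.obj (op X')),
          IsUniversalUltrafilter P G ∧ ∀ X' : C, F X' ⊆ G X')) := by
  refine ⟨⟨models_to_filter P F, fun hF => ⟨modelsOf P F, modelsOf_char P F hF⟩⟩,
    filter_iff_inter_uu P F, ⟨?_, ?_⟩, ⟨?_, ?_⟩⟩
  · -- nonempty models → filter ∧ ⊥ ∉ F t
    rintro ⟨Ms, ⟨M, hM⟩, h⟩
    refine ⟨models_to_filter P F ⟨Ms, h⟩, ?_⟩
    intro hbot
    haveI := M.preserves
    have x : M.functor.obj (⊤_ C) :=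
      (PreservesTerminal.iso M.functor).inv (Types.terminalIso.inv PUnit.unit)
    exact interp_bot P M (⊤_ C) x ((h (⊤_ C) ⊥).1 hbot M hM x)
  · -- filter ∧ ⊥ ∉ F t → nonempty models
    rintro ⟨hF, hbot⟩
    refine ⟨modelsOf P F, ?_, modelsOf_char P F hF⟩
    obtain ⟨U, hU, hFU, hbU, hp, hb⟩ :=
      exists_prime_filter (F (⊤_ C)) (hF.2 (⊤_ C)) ⊥ hbot
    exact ⟨pointModel P (⊤_ C) U hU hp hb, ⊤_ C, U, hU, hp, hb, hFU, rfl⟩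
  · rintro ⟨hF, hbot⟩
    refine ⟨(filter_iff_inter_uu P F).1 hF, ?_⟩
    obtain ⟨G, hGU, hFG, _⟩ := exists_universal_ultrafilter P F hF (⊤_ C) ⊥ hbot
    exact ⟨G, hGU, hFG⟩
  · rintro ⟨hchar, G, hGU, hFG⟩
    refine ⟨inter_uu_filter P F hchar, fun hbot => hGU.2.2.2 (hFG (⊤_ C) hbot)⟩


theorem stmt19 {C : Type u} [SmallCategory C] [HasFiniteProducts C]
    (P : Cᵒᵖ ⥤ BoolAlg.{u}) (F : ∀ X : C, Set (P.obj (op X))) :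
    ((∃ Ms : Set (PropModel P), ∀ (X : C) (α : P.obj (op X)),
        α ∈ F X ↔ ∀ M ∈ Ms, ∀ x : M.functor.obj X, x ∈ PropModel.interp M α) ↔
      IsUniversalFilter P F) ∧
    (IsUniversalFilter P F ↔
      ∀ (X : C) (α : P.obj (op X)),
        α ∈ F X ↔ ∀ G : ∀ X' : C, Set (P.obj (op X')),
          IsUniversalUltrafilter P G → (∀ X' : C, F X' ⊆ G X') → α ∈ G X) ∧
    ((∃ Ms : Set (PropModel P), Ms.Nonempty ∧ ∀ (X : C) (α : P.obj (op X)),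
        α ∈ F X ↔ ∀ M ∈ Ms, ∀ x : M.functor.obj X, x ∈ PropModel.interp M α) ↔
      (IsUniversalFilter P F ∧ (⊥ : P.obj (op (⊤_ C))) ∉ F (⊤_ C))) ∧
    ((IsUniversalFilter P F ∧ (⊥ : P.obj (op (⊤_ C))) ∉ F (⊤_ C)) ↔
      ((∀ (X : C) (α : P.obj (op X)),
          α ∈ F X ↔ ∀ G : ∀ X' : C, Set (P.obj (op X')),
            IsUniversalUltrafilter P G → (∀ X' : C, F X' ⊆ G X') → α ∈ G X) ∧
        ∃ G : ∀ X' : C, Set (P.obj (op X')),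
          IsUniversalUltrafilter P G ∧ ∀ X' : C, F X' ⊆ G X')) := by
  exact stmt19' P F

end BooleanDoctrine
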